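/- Truncation preserves orbit count: suppose {g} ∪ G is a family of pairings on {1,...,N} and [N'+1, N] is a nonempty terminal subinterval that meets the domain or range of no pairing in G, is disjoint from the domain of g, and is contained in the range [c,N] of g, where g: [a,b] → [c,N] is increasing (g(x) = x + (c - a)). Let g': [a, b-(N-N')] → [c, N'] be the restriction of g. Then the number of orbits of {1,...,N} under {g} ∪ G equals the number of orbits of {1,...,N'} under {g'} ∪ G. -/

import Mathlib

/-- Truncation preserves the orbit count.  Let `g : [a,b] → [a+k, N]` be the
increasing pairing `g(x) = x + k` (so `N = b + k`), let `[N'+1, N]` be a nonempty terminal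
subinterval contained in the range of `g` (`a + k ≤ N' + 1`), disjoint from the domain of
`g` (`b ≤ N'`), and meeting no other pairing `R` of the family.  Let
`g' : [a, b-(N-N')] → [a+k, N']` be the restriction of `g`.  Then the number of orbits of
`{1,…,N}` under `{g} ∪ R` equals the number of orbits of `{1,…,N'}` under `{g'} ∪ R`. -/
theorem stmt5 (N N' a b k : ℕ) (ha : 1 ≤ a) (hab : a ≤ b) (hN : N = b + k)
    (hN' : N' < N) (hcN' : a + k ≤ N' + 1) (hbN' : b ≤ N')
    (R : ℕ → ℕ → Prop)
    (hR : ∀ x y, R x y → 1 ≤ x ∧ x ≤ N' ∧ 1 ≤ y ∧ y ≤ N') :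
    Nat.card (Quot (fun x y : Set.Icc 1 N =>
        (a ≤ x.1 ∧ x.1 ≤ b ∧ y.1 = x.1 + k) ∨ R x.1 y.1)) =
    Nat.card (Quot (fun x y : Set.Icc 1 N' =>
        (a ≤ x.1 ∧ x.1 ≤ b - (N - N') ∧ y.1 = x.1 + k) ∨ R x.1 y.1)) := by
  set S : Set.Icc 1 N → Set.Icc 1 N → Prop := fun x y =>
    (a ≤ x.1 ∧ x.1 ≤ b ∧ y.1 = x.1 + k) ∨ R x.1 y.1 with hS
  set S' : Set.Icc 1 N' → Set.Icc 1 N' → Prop := fun x y =>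
    (a ≤ x.1 ∧ x.1 ≤ b - (N - N') ∧ y.1 = x.1 + k) ∨ R x.1 y.1 with hS'
  let f : Set.Icc 1 N → Set.Icc 1 N' := fun x =>
    ⟨if x.1 ≤ N' then x.1 else x.1 - k, by
      have h1 := x.2.1
      have h2 := x.2.2
      simp only [Set.mem_Icc]
      split <;> omega⟩
  let ι : Set.Icc 1 N' → Set.Icc 1 N := fun x => ⟨x.1, x.2.1, x.2.2.trans hN'.le⟩
  have hcomp : ∀ x y : Set.Icc 1 N, S x y →
      Quot.mk S' (f x) = Quot.mk S' (f y) := by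
    intro x y hxy
    rcases hxy with ⟨hax, hxb, hy⟩ | hr
    · have hx2 := x.2.2
      have hy2 := y.2.2
      have hfx : ((f x) : ℕ) = x.1 := if_pos (hxb.trans hbN')
      by_cases h : y.1 ≤ N'
      · have hfy : ((f y) : ℕ) = y.1 := if_pos h
        apply Quot.sound
        exact Or.inl ⟨by omega, by omega, by omega⟩
      · have hfy : ((f y) : ℕ) = y.1 - k := if_neg h
        congr 1
        apply Subtype.ext
        omega
    · have h := hR _ _ hr
      have hfx : ((f x) : ℕ) = x.1 := if_pos h.2.1
      have hfy : ((f y) : ℕ) = y.1 := if_pos h.2.2.2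
      apply Quot.sound
      right
      rw [hfx, hfy]
      exact hr
  have hcomp' : ∀ x y : Set.Icc 1 N', S' x y →
      Quot.mk S (ι x) = Quot.mk S (ι y) := by
    intro x y hxy
    apply Quot.sound
    rcases hxy with ⟨hax, hxb, hy⟩ | hr
    · exact Or.inl ⟨hax, hxb.trans (Nat.sub_le _ _), hy⟩
    · exact Or.inr hr
  have key : ∀ x : Set.Icc 1 N, Quot.mk S (ι (f x)) = Quot.mk S x := by
    intro x
    by_cases h : x.1 ≤ N'
    · congr 1
      apply Subtype.ext
      exact if_pos h
    · have h1 := x.2.1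
      have h2 := x.2.2
      have hfx : ((ι (f x)) : ℕ) = x.1 - k := if_neg h
      apply Quot.sound
      exact Or.inl ⟨by omega, by omega, by omega⟩
  have key' : ∀ x : Set.Icc 1 N', f (ι x) = x := by
    intro x
    apply Subtype.ext
    exact if_pos x.2.2
  apply Nat.card_congr
  exact {
    toFun := Quot.lift (fun x => Quot.mk S' (f x)) hcomp
    invFun := Quot.lift (fun x => Quot.mk S (ι x)) hcomp'
    left_inv := by
      intro q
      induction q using Quot.ind with
      | _ x => exact key x
    right_inv := by
      intro q
      induction q using Quot.ind with
      | _ x => exact congrArg (Quot.mk S') (key' x)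
  }
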